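/- Let w ∈ ℝ^n satisfy |w^{(i)}| ≤ τ for every i. Let S ⊆ [n] be such that σ² = Σ_{i∈S} (w^{(i)})² > 0. Let y be a random vector in {0,1}^n such that the coordinates (y_i)_{i∈S} are i.i.d. uniform random bits, independent of the coordinates (y_i)_{i∉S} (which have an arbitrary joint distribution). Then for all real numbers a ≤ b, Pr[ ⟨w,y⟩ ∈ [a,b] ] ≤ 2(b−a)/σ + 2τ/σ. -/

import Mathlib

open MeasureTheory
open Real
open scoped ENNReal

noncomputable section

/-- The real value (0 or 1) of a bit. -/
def bval (b : Bool) : ℝ := if b then 1 else 0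

/-- The distribution of a biased coin on `Bool` with probability `p` of `true`. -/
def coin (p : ℝ) : Measure Bool :=
  (PMF.bernoulli (min (Real.toNNReal p) 1) (min_le_right _ _)).toMeasure

instance coin_prob (p : ℝ) : IsProbabilityMeasure (coin p) :=
  PMF.toMeasure.isProbabilityMeasure _

lemma coin_half (b : Bool) : coin (1/2) {b} = 2⁻¹ := by
  have hp : min (Real.toNNReal (1/2)) 1 = 2⁻¹ := by
    rw [show ((1:ℝ)/2) = (2:ℝ)⁻¹ by norm_num, Real.toNNReal_inv, Real.toNNReal_ofNat]
    exact min_eq_left (inv_le_one_of_one_le₀ one_le_two)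
  rw [coin, PMF.toMeasure_apply_singleton _ _ (measurableSet_singleton b)]
  rw [PMF.bernoulli_apply, hp]
  cases b <;> simp [ENNReal.one_sub_inv_two]

lemma pi_singleton {ι : Type} [Fintype ι] (x : ι → Bool) :
    ({x} : Set (ι → Bool)) = Set.pi Set.univ (fun i => {x i}) := by
  ext y
  simp [Set.mem_pi, funext_iff, eq_comm]

lemma pi_singleton_meas {ι : Type} [Fintype ι] (x : ι → Bool) :
    MeasurableSet ({x} : Set (ι → Bool)) := by
  rw [pi_singleton]
  exact MeasurableSet.univ_pi (fun i => measurableSet_singleton (x i))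

lemma meas_all {ι : Type} [Fintype ι] (A : Set (ι → Bool)) : MeasurableSet A := by
  rw [← Set.biUnion_of_singleton A]
  exact MeasurableSet.biUnion (Set.to_countable A) fun b _ => pi_singleton_meas b

lemma pi_coin_singleton {ι : Type} [Fintype ι] (x : ι → Bool) :
    (Measure.pi fun _ : ι => coin (1/2)) {x} = 2⁻¹ ^ (Fintype.card ι) := by
  rw [pi_singleton, Measure.pi_pi]
  simp only [coin_half]
  rw [Finset.prod_const, Finset.card_univ]

lemma pi_coin_apply {ι : Type} [Fintype ι] (A : Set (ι → Bool)) :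
    (Measure.pi fun _ : ι => coin (1/2)) A
      = (Set.toFinite A).toFinset.card * 2⁻¹ ^ (Fintype.card ι) := by
  classical
  have hA : A = ⋃ x ∈ (Set.toFinite A).toFinset, ({x} : Set (ι → Bool)) := by
    ext y
    constructor
    · intro hy
      exact Set.mem_biUnion ((Set.toFinite A).mem_toFinset.2 hy) rfl
    · intro hy
      rcases Set.mem_iUnion₂.1 hy with ⟨x, hx, hyx⟩
      rcases hyx with rfl
      exact (Set.Finite.mem_toFinset _).1 hx
  have hd : Set.PairwiseDisjoint (((Set.toFinite A).toFinset : Finset (ι → Bool)) : Set (ι → Bool))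
      (fun x => ({x} : Set (ι → Bool))) := by
    intro p _ q _ hpq
    simp [Function.onFun, Set.disjoint_singleton, hpq]
  conv_lhs => rw [hA]
  rw [measure_biUnion_finset hd (fun b _ => pi_singleton_meas b)]
  have hs : ∀ x ∈ (Set.toFinite A).toFinset,
      (Measure.pi fun _ : ι => coin (1/2)) {x} = 2⁻¹ ^ (Fintype.card ι) :=
    fun x _ => pi_coin_singleton x
  rw [Finset.sum_congr rfl hs, Finset.sum_const, nsmul_eq_mul]

lemma abs_one_add_exp (θ : ℝ) :
    ‖1 + Complex.exp (θ * Complex.I)‖ = 2 * |Real.cos (θ/2)| := by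
  have hexp : Complex.exp ((θ:ℂ) * Complex.I)
      = (Real.cos θ : ℂ) + (Real.sin θ : ℂ) * Complex.I := by
    rw [Complex.exp_mul_I, Complex.ofReal_cos, Complex.ofReal_sin]
  have hz : ∀ u v : ℝ, (1 + ((u : ℂ) + (v : ℂ) * Complex.I))
      = Complex.mk (1 + u) v := by
    intro u v
    apply Complex.ext <;> simp
  rw [hexp, hz, Complex.norm_def, Complex.normSq_mk]
  have hcos2 : Real.cos θ = 2 * Real.cos (θ/2)^2 - 1 := by
    have h := Real.cos_two_mul (θ/2)
    rw [show (2:ℝ)*(θ/2) = θ from by ring] at h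
    linarith
  have hsin1 : Real.sin θ^2 + Real.cos θ^2 = 1 := Real.sin_sq_add_cos_sq θ
  have hval : (1 + Real.cos θ) * (1 + Real.cos θ) + Real.sin θ * Real.sin θ
      = (2*|Real.cos (θ/2)|)^2 := by
    have h4 : (2*|Real.cos (θ/2)|)^2 = 4*Real.cos (θ/2)^2 := by
      rw [mul_pow, sq_abs]; ring
    nlinarith
  rw [hval, Real.sqrt_sq (by positivity)]

lemma char_bound {ι : Type} [Fintype ι] [DecidableEq ι] (c : ι → ℝ) (ρ : ℝ) (t : ℝ) :
    |∑ x : ι → Bool, Real.cos (t * ((∑ i, c i * bval (x i)) + ρ))|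
      ≤ 2^(Fintype.card ι) * ∏ i, |Real.cos (t * c i / 2)| := by
  classical
  -- rewrite each cosine as a real part
  have hrepr : ∀ x : ι → Bool, Real.cos (t * ((∑ i, c i * bval (x i)) + ρ))
      = (Complex.exp ((t*ρ : ℝ) * Complex.I)
          * ∏ i, Complex.exp ((t * c i * bval (x i) : ℝ) * Complex.I)).re := by
    intro x
    rw [← Complex.exp_sum]
    rw [← Complex.exp_add]
    have harg : ((t*ρ : ℝ) : ℂ) * Complex.I
        + ∑ i, ((t * c i * bval (x i) : ℝ) : ℂ) * Complex.I
        = ((t * ((∑ i, c i * bval (x i)) + ρ) : ℝ) : ℂ) * Complex.I := by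
      push_cast
      conv_rhs => rw [mul_add, add_mul, Finset.mul_sum, Finset.sum_mul]
      rw [add_comm]
      congr 1
      exact Finset.sum_congr rfl (fun i _ => by ring)
    rw [harg, Complex.exp_ofReal_mul_I_re]
  simp_rw [hrepr]
  rw [← Complex.re_sum]
  rw [← Finset.mul_sum]
  -- product-sum swap
  have hswap : (∑ x : ι → Bool, ∏ i, Complex.exp ((t * c i * bval (x i) : ℝ) * Complex.I))
      = ∏ i, (1 + Complex.exp ((t * c i : ℝ) * Complex.I)) := by
    have h := Finset.prod_univ_sum (fun _ : ι => (Finset.univ : Finset Bool))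
      (fun i b => Complex.exp ((t * c i * bval b : ℝ) * Complex.I))
    rw [Fintype.piFinset_univ] at h
    rw [← h]
    apply Finset.prod_congr rfl
    intro i _
    rw [Fintype.sum_bool]
    simp [bval, add_comm]
  rw [hswap]
  calc |(Complex.exp ((t*ρ : ℝ) * Complex.I)
        * ∏ i, (1 + Complex.exp ((t * c i : ℝ) * Complex.I))).re|
      ≤ ‖(Complex.exp ((t*ρ : ℝ) * Complex.I)
        * ∏ i, (1 + Complex.exp ((t * c i : ℝ) * Complex.I)))‖ := Complex.abs_re_le_norm _
    _ = ∏ i, ‖(1 + Complex.exp ((t * c i : ℝ) * Complex.I))‖ := by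
        rw [norm_mul, Complex.norm_exp_ofReal_mul_I, one_mul, norm_prod]
    _ = ∏ i, 2 * |Real.cos (t * c i / 2)| := by
        apply Finset.prod_congr rfl
        intro i _
        rw [abs_one_add_exp (t * c i)]
    _ = 2^(Fintype.card ι) * ∏ i, |Real.cos (t * c i / 2)| := by
        rw [Finset.prod_mul_distrib, Finset.prod_const, Finset.card_univ]

lemma mono_help {f f' : ℝ → ℝ} (hf : ∀ x, HasDerivAt f (f' x) x)
    (h0 : ∀ x, 0 ≤ x → 0 ≤ f' x) {v : ℝ} (hv : 0 ≤ v) : f 0 ≤ f v := by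
  have hmono : MonotoneOn f (Set.Ici 0) := by
    apply monotoneOn_of_deriv_nonneg (convex_Ici 0)
    · exact fun x _ => (hf x).continuousAt.continuousWithinAt
    · exact fun x hx => (hf x).differentiableAt.differentiableWithinAt
    · intro x hx
      rw [(hf x).deriv]
      rw [interior_Ici] at hx
      exact h0 x (le_of_lt hx)
  exact hmono (by simp : (0:ℝ) ∈ Set.Ici 0) (Set.mem_Ici.2 hv) hv

lemma sin_cubic {v : ℝ} (hv : 0 ≤ v) : v - v^3/6 ≤ Real.sin v := by
  have key : ∀ x : ℝ, HasDerivAt (fun x : ℝ => Real.sin x - (x - x^3/6))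
      (Real.cos x - (1 - x^2/2)) x := by
    intro x
    have h1 : HasDerivAt (fun x : ℝ => Real.sin x - (x - x^3/6))
        (Real.cos x - (1 - ((3:ℕ):ℝ) * x^(3-1)/6)) x :=
      (Real.hasDerivAt_sin x).sub ((hasDerivAt_id' x).sub ((hasDerivAt_pow 3 x).div_const 6))
    convert h1 using 1
    norm_num
    ring
  have := mono_help key (fun x hx => by
    have := Real.one_sub_sq_div_two_le_cos (x := x); linarith) hv
  simp at this
  linarith

lemma exp_neg_le_quad {c : ℝ} (hc : 0 ≤ c) : Real.exp (-c) ≤ 1 - c + c^2/2 := by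
  have key : ∀ x : ℝ, HasDerivAt (fun x : ℝ => (1 - x + x^2/2) - Real.exp (-x))
      ((-1 + x) + Real.exp (-x)) x := by
    intro x
    have he : HasDerivAt (fun x : ℝ => Real.exp (-x)) (-Real.exp (-x)) x := by
      simpa [Function.comp_def] using (Real.hasDerivAt_exp (-x)).comp x (hasDerivAt_neg x)
    have h1 : HasDerivAt (fun x : ℝ => 1 - x + x^2/2) (0 - 1 + (2*x)/2) x := by
      exact (((hasDerivAt_const x (1:ℝ)).sub (hasDerivAt_id' x)).add
        (by simpa using (hasDerivAt_pow 2 x).div_const 2))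
    refine (h1.sub he).congr_deriv ?_
    ring
  have := mono_help key (fun x hx => by
    have h := Real.add_one_le_exp (-x)
    have : Real.exp (-x) ≤ 1 := by
      calc Real.exp (-x) = (Real.exp x)⁻¹ := Real.exp_neg x
        _ ≤ 1 := by
          rw [inv_le_one_iff₀]; right; linarith [Real.add_one_le_exp x]
    linarith) hc
  simp at this
  linarith

lemma cubic_le_exp_neg {c : ℝ} (hc : 0 ≤ c) : 1 - c + c^2/2 - c^3/6 ≤ Real.exp (-c) := by
  have key : ∀ x : ℝ, HasDerivAt (fun x : ℝ => Real.exp (-x) - (1 - x + x^2/2 - x^3/6))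
      ((1 - x + x^2/2) - Real.exp (-x)) x := by
    intro x
    have he : HasDerivAt (fun x : ℝ => Real.exp (-x)) (-Real.exp (-x)) x := by
      simpa [Function.comp_def] using (Real.hasDerivAt_exp (-x)).comp x (hasDerivAt_neg x)
    have h1 : HasDerivAt (fun x : ℝ => 1 - x + x^2/2 - x^3/6)
        (0 - 1 + ((2:ℕ):ℝ)*x^(2-1)/2 - ((3:ℕ):ℝ)*x^(3-1)/6) x := by
      exact ((((hasDerivAt_const x (1:ℝ)).sub (hasDerivAt_id' x)).add
        ((hasDerivAt_pow 2 x).div_const 2)).sub ((hasDerivAt_pow 3 x).div_const 6))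
    refine (he.sub h1).congr_deriv ?_
    norm_num
    ring
  have := mono_help key (fun x hx => by linarith [exp_neg_le_quad hx]) hc
  simp at this
  linarith

lemma cos_exp_bound {θ : ℝ} (h : |θ| ≤ π/2) : |Real.cos θ| ≤ Real.exp (-(θ^2/2)) := by
  set t := |θ| with ht
  have ht0 : 0 ≤ t := abs_nonneg θ
  have hcoseq : Real.cos θ = Real.cos t := (Real.cos_abs θ).symm
  have hcos0 : 0 ≤ Real.cos t :=
    Real.cos_nonneg_of_mem_Icc ⟨by linarith [Real.pi_pos], h⟩
  have hθt : θ^2 = t^2 := (sq_abs θ).symm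
  rw [hcoseq, abs_of_nonneg hcos0, hθt]
  -- c := t^2/2
  set c : ℝ := t^2/2 with hcdef
  have hc0 : 0 ≤ c := by positivity
  have hpi : π ≤ 3.15 := by linarith [Real.pi_lt_d2]
  have hc_le : c ≤ 1.25 := by
    have : t ≤ 3.15/2 := le_trans h (by linarith)
    nlinarith
  -- cos t = 1 - 2 sin(t/2)^2
  have hcos_id : Real.cos t = 1 - 2 * Real.sin (t/2)^2 := by
    have h2 := Real.cos_two_mul' (t/2)
    rw [show (2:ℝ) * (t/2) = t from by ring] at h2
    have hpy := Real.sin_sq_add_cos_sq (t/2)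
    linarith
  have hs : t/2 - (t/2)^3/6 ≤ Real.sin (t/2) := sin_cubic (by linarith)
  have hs0 : 0 ≤ t/2 - (t/2)^3/6 := by nlinarith
  have hsin_sq : (t/2 - (t/2)^3/6)^2 ≤ Real.sin (t/2)^2 := by
    exact pow_le_pow_left₀ hs0 hs 2
  have hid : (t/2 - (t/2)^3/6)^2 = (c/2)*(1 - c/12)^2 := by
    rw [hcdef]; ring
  have h1 : Real.cos t ≤ 1 - c*(1 - c/12)^2 := by
    rw [hcos_id]
    nlinarith [hsin_sq, hid]
  have h2 : 1 - c*(1 - c/12)^2 ≤ 1 - c + c^2/2 - c^3/6 := by nlinarith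
  have h3 := cubic_le_exp_neg hc0
  have : t^2/2 = c := hcdef.symm
  rw [show -(t^2/2) = -c from by rw [this]]
  linarith

lemma fejer_closed {U y : ℝ} (hU : 0 < U) (hy : y ≠ 0) :
    ∫ t in (0:ℝ)..U, (1 - t/U) * Real.cos (t*y)
      = (1 - Real.cos (U*y))/(U*y^2) := by
  have key : ∀ t : ℝ, HasDerivAt
      (fun t => Real.sin (t*y)/y - (t*Real.sin (t*y)/y + Real.cos (t*y)/y^2)/U)
      ((1 - t/U) * Real.cos (t*y)) t := by
    intro t
    have hty : HasDerivAt (fun t : ℝ => t*y) y t := by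
      simpa using (hasDerivAt_id' t).mul_const y
    have hsin : HasDerivAt (fun t : ℝ => Real.sin (t*y)) (Real.cos (t*y)*y) t :=
      hty.sin
    have hcos : HasDerivAt (fun t : ℝ => Real.cos (t*y)) (-Real.sin (t*y)*y) t :=
      hty.cos
    have htsin : HasDerivAt (fun t : ℝ => t*Real.sin (t*y))
        (1*Real.sin (t*y) + t*(Real.cos (t*y)*y)) t :=
      (hasDerivAt_id' t).mul hsin
    have h := (hsin.div_const y).sub
      (((htsin.div_const y).add (hcos.div_const (y^2))).div_const U)
    refine h.congr_deriv ?_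
    field_simp
    ring
  rw [intervalIntegral.integral_eq_sub_of_hasDerivAt
    (fun t _ => key t) (by apply Continuous.intervalIntegrable; fun_prop)]
  simp [Real.sin_zero, Real.cos_zero]
  field_simp
  ring

lemma fejer_zero {U : ℝ} (hU : 0 < U) : (∫ t in (0:ℝ)..U, (1 - t/U)) = U/2 := by
  have key : ∀ t : ℝ, HasDerivAt (fun t : ℝ => t - t^2/(2*U)) (1 - t/U) t := by
    intro t
    have h := (hasDerivAt_id' t).sub (((hasDerivAt_pow 2 t)).div_const (2*U))
    refine h.congr_deriv ?_
    field_simp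
    ring
  rw [intervalIntegral.integral_eq_sub_of_hasDerivAt
    (fun t _ => key t) (by apply Continuous.intervalIntegrable; fun_prop)]
  field_simp
  ring

set_option maxHeartbeats 1000000 in
lemma gauss_tail {β X : ℝ} (hβ : 0 < β) (hX : 0 ≤ X) :
    ∫ t in (0:ℝ)..X, Real.exp (-(β*t^2)) ≤ Real.sqrt (π/β)/2 := by
  have hint : IntegrableOn (fun t : ℝ => Real.exp (-(β*t^2))) (Set.Ioi 0) := by
    simpa [neg_mul] using (integrable_exp_neg_mul_sq hβ).integrableOn (s := Set.Ioi 0)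
  have hmono : ∫ t in Set.Ioc (0:ℝ) X, Real.exp (-(β*t^2))
      ≤ ∫ t in Set.Ioi (0:ℝ), Real.exp (-(β*t^2)) :=
    setIntegral_mono_set hint
      (Filter.Eventually.of_forall fun t => by positivity)
      (HasSubset.Subset.eventuallyLE Set.Ioc_subset_Ioi_self)
  have hgauss : ∫ t in Set.Ioi (0:ℝ), Real.exp (-(β*t^2)) = Real.sqrt (π/β)/2 := by
    simpa [neg_mul] using integral_gaussian_Ioi β
  rw [intervalIntegral.integral_of_le hX]
  rw [hgauss] at hmono
  exact hmono

set_option maxHeartbeats 1000000 in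
lemma core_T {ι : Type} [Fintype ι] [DecidableEq ι] (c : ι → ℝ) (τ r a b T : ℝ)
    (hc : ∀ i, |c i| ≤ τ) (hσ : 0 < ∑ i, c i ^ 2) (hab : a ≤ b)
    (hT : 0 < T) (hTτ : T * τ ≤ π/2) (hTL : T * ((b-a)/2) ≤ 1) :
    ((Measure.pi fun _ : ι => coin (1/2))
        {x : ι → Bool | a ≤ (∑ i, c i * bval (x i)) + r
          ∧ (∑ i, c i * bval (x i)) + r ≤ b}).toReal
      ≤ (1/(1 - (T*((b-a)/2))^2/6)^2) * (1/T)
          * (Real.sqrt (2*π) / Real.sqrt (∑ i, c i ^ 2)) := by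
  classical
  set σ2 : ℝ := ∑ i, c i ^ 2 with hσ2
  set σs : ℝ := Real.sqrt σ2 with hσs
  have hσs0 : 0 < σs := Real.sqrt_pos.2 hσ
  set k : ℕ := Fintype.card ι with hk
  set Λ : ℝ := (b-a)/2 with hΛ
  set m : ℝ := (a+b)/2 with hm
  set ρ : ℝ := r - m with hρ
  have hΛ0 : 0 ≤ Λ := by rw [hΛ]; linarith
  set u : ℝ := T * Λ with hu
  have hu0 : 0 ≤ u := by positivity
  have hu1 : u ≤ 1 := hTL
  set KL : ℝ := (1 - u^2/6)^2 with hKL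
  have hKL0 : 0 < KL := by
    have : u^2 ≤ 1 := by nlinarith
    rw [hKL]; nlinarith
  have hKL1 : KL ≤ 1 := by
    have h1 : 0 ≤ 1 - u^2/6 := by nlinarith
    have h2 : 1 - u^2/6 ≤ 1 := by nlinarith
    nlinarith
  -- the shifted sums
  set g : (ι → Bool) → ℝ := fun x => (∑ i, c i * bval (x i)) + ρ with hg
  set A : Set (ι → Bool) := {x : ι → Bool | a ≤ (∑ i, c i * bval (x i)) + r
    ∧ (∑ i, c i * bval (x i)) + r ≤ b} with hA
  set E : Finset (ι → Bool) := Finset.univ.filter (fun x => x ∈ A) with hE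
  -- counting
  have hcard : (Set.toFinite A).toFinset = E := by
    ext x
    simp only [Set.Finite.mem_toFinset, hE, Finset.mem_filter, Finset.mem_univ, true_and]
  have hmeasA : ((Measure.pi fun _ : ι => coin (1/2)) A).toReal
      = (E.card : ℝ) * (1/2)^k := by
    rw [pi_coin_apply, hcard]
    rw [ENNReal.toReal_mul, ENNReal.toReal_pow]
    simp [hk]
  -- kernel
  set K : ℝ → ℝ := fun y => (1/T) * ∫ t in (0:ℝ)..(2*T), (1 - t/(2*T)) * Real.cos (t*y)
    with hKdef
  have hT2 : (0:ℝ) < 2*T := by linarith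
  have hKform : ∀ y : ℝ, y ≠ 0 → K y = Real.sin (T*y)^2/(T*y)^2 := by
    intro y hy
    rw [hKdef]
    simp only
    rw [fejer_closed hT2 hy]
    have hc2 : Real.cos (2*T*y) = Real.cos (T*y)^2 - Real.sin (T*y)^2 := by
      have h := Real.cos_two_mul' (T*y)
      rw [show (2:ℝ)*(T*y) = 2*T*y from by ring] at h
      exact h
    have hpy := Real.sin_sq_add_cos_sq (T*y)
    have h5 : 1 - Real.cos (2*T*y) = 2*Real.sin (T*y)^2 := by
      rw [hc2]; nlinarith [hpy]
    rw [h5]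
    field_simp
  have hK0 : K 0 = 1 := by
    rw [hKdef]
    simp only [mul_zero, Real.cos_zero, mul_one]
    rw [fejer_zero hT2]
    field_simp
  have hKnonneg : ∀ y : ℝ, 0 ≤ K y := by
    intro y
    rcases eq_or_ne y 0 with rfl | hy
    · rw [hK0]; norm_num
    · rw [hKform y hy]; positivity
  have hKlower : ∀ y : ℝ, |y| ≤ Λ → KL ≤ K y := by
    intro y hy
    rcases eq_or_ne y 0 with rfl | hyne
    · rw [hK0]; exact hKL1
    · rw [hKform y hyne]
      set v : ℝ := T * |y| with hv
      have hv0 : 0 < v := by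
        rw [hv]
        exact mul_pos hT (abs_pos.2 hyne)
      have hvu : v ≤ u := by
        rw [hv, hu]
        exact mul_le_mul_of_nonneg_left hy (le_of_lt hT)
      have hsq : Real.sin (T*y)^2 = Real.sin v ^2 := by
        rcases abs_cases y with ⟨h1, _⟩ | ⟨h1, _⟩
        · rw [hv, h1]
        · rw [hv, h1, mul_neg, Real.sin_neg]
          ring
      have hTy2 : (T*y)^2 = v^2 := by
        rw [hv, mul_pow, mul_pow, sq_abs]
      rw [hsq, hTy2]
      have hsin : v - v^3/6 ≤ Real.sin v := sin_cubic (le_of_lt hv0)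
      have hv2u2 : v^2 ≤ u^2 := by nlinarith
      have hvv2 : v*v^2 ≤ v*u^2 := mul_le_mul_of_nonneg_left hv2u2 (le_of_lt hv0)
      have hfac : v * (1 - u^2/6) ≤ v - v^3/6 := by nlinarith [hvv2]
      have hfac0 : 0 ≤ v * (1 - u^2/6) := by
        apply mul_nonneg (le_of_lt hv0)
        nlinarith
      have hsa : v * (1 - u^2/6) ≤ Real.sin v := le_trans hfac hsin
      have hsin2 : (v * (1 - u^2/6))^2 ≤ Real.sin v ^2 := by
        apply sq_le_sq' (by linarith) hsa
      rw [le_div_iff₀ (by positivity)]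
      calc KL * v^2 = (v * (1 - u^2/6))^2 := by rw [hKL]; ring
        _ ≤ Real.sin v ^2 := hsin2
  -- the cosine sum
  set Cf : ℝ → ℝ := fun t => ∑ x : ι → Bool, Real.cos (t * g x) with hCf
  have hCcont : Continuous Cf := by
    apply continuous_finset_sum
    intro x _
    fun_prop
  have hsumK : ∑ x : ι → Bool, K (g x)
      = (1/T) * ∫ t in (0:ℝ)..(2*T), (1 - t/(2*T)) * Cf t := by
    rw [hKdef]
    simp only
    rw [← Finset.mul_sum]
    congr 1
    rw [← intervalIntegral.integral_finset_sum]
    · apply intervalIntegral.integral_congr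
      intro t _
      simp only [hCf]
      rw [Finset.mul_sum]
    · intro x _
      apply Continuous.intervalIntegrable
      fun_prop
  -- pointwise bound
  have hptwise : ∀ t ∈ Set.Icc (0:ℝ) (2*T),
      (1 - t/(2*T)) * Cf t ≤ (2:ℝ)^k * Real.exp (-(σ2/8 * t^2)) := by
    intro t ht
    have ht0 : 0 ≤ t := ht.1
    have ht2 : t ≤ 2*T := ht.2
    have hfr0 : 0 ≤ 1 - t/(2*T) := by
      rw [sub_nonneg, div_le_one hT2]
      exact ht2
    have hfr1 : 1 - t/(2*T) ≤ 1 := by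
      have : 0 ≤ t/(2*T) := by positivity
      linarith
    have hCb : |Cf t| ≤ 2^k * ∏ i, |Real.cos (t * c i / 2)| := by
      rw [hCf]
      simp only [hg]
      exact char_bound c ρ t
    have hprod : ∏ i, |Real.cos (t * c i / 2)| ≤ Real.exp (-(σ2/8 * t^2)) := by
      have hper : ∀ i, |Real.cos (t * c i / 2)| ≤ Real.exp (-((t * c i / 2)^2/2)) := by
        intro i
        apply cos_exp_bound
        have h1 : |t * c i / 2| = t * |c i| / 2 := by
          rw [abs_div, abs_mul, abs_of_nonneg ht0]
          norm_num
        rw [h1]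
        have h2 : t * |c i| ≤ (2*T) * τ := by
          apply mul_le_mul ht2 (hc i) (abs_nonneg _) (le_of_lt hT2)
        nlinarith
      calc ∏ i, |Real.cos (t * c i / 2)|
          ≤ ∏ i, Real.exp (-((t * c i / 2)^2/2)) := by
            apply Finset.prod_le_prod
            · intro i _; positivity
            · intro i _; exact hper i
        _ = Real.exp (∑ i, -((t * c i / 2)^2/2)) := by rw [Real.exp_sum]
        _ = Real.exp (-(t^2/8 * σ2)) := by
            congr 1
            rw [hσ2, Finset.mul_sum, ← Finset.sum_neg_distrib]
            apply Finset.sum_congr rfl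
            intro i _
            ring
        _ = Real.exp (-(σ2/8 * t^2)) := by ring_nf
    calc (1 - t/(2*T)) * Cf t ≤ |(1 - t/(2*T)) * Cf t| := le_abs_self _
      _ = (1 - t/(2*T)) * |Cf t| := by rw [abs_mul, abs_of_nonneg hfr0]
      _ ≤ 1 * |Cf t| := by
          apply mul_le_mul_of_nonneg_right hfr1 (abs_nonneg _)
      _ = |Cf t| := one_mul _
      _ ≤ 2^k * ∏ i, |Real.cos (t * c i / 2)| := hCb
      _ ≤ 2^k * Real.exp (-(σ2/8 * t^2)) := by
          apply mul_le_mul_of_nonneg_left hprod (by positivity)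
  -- integral bound
  have hintbound : ∫ t in (0:ℝ)..(2*T), (1 - t/(2*T)) * Cf t
      ≤ (2:ℝ)^k * (Real.sqrt (2*π) / σs) := by
    have h1 : ∫ t in (0:ℝ)..(2*T), (1 - t/(2*T)) * Cf t
        ≤ ∫ t in (0:ℝ)..(2*T), (2:ℝ)^k * Real.exp (-(σ2/8 * t^2)) := by
      apply intervalIntegral.integral_mono_on (le_of_lt hT2)
      · apply Continuous.intervalIntegrable
        fun_prop
      · apply Continuous.intervalIntegrable
        fun_prop
      · exact hptwise
    have h2 : ∫ t in (0:ℝ)..(2*T), (2:ℝ)^k * Real.exp (-(σ2/8 * t^2))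
        = (2:ℝ)^k * ∫ t in (0:ℝ)..(2*T), Real.exp (-(σ2/8 * t^2)) := by
      exact intervalIntegral.integral_const_mul _ _
    have h3 : ∫ t in (0:ℝ)..(2*T), Real.exp (-(σ2/8 * t^2)) ≤ Real.sqrt (π/(σ2/8))/2 :=
      gauss_tail (by positivity) (le_of_lt hT2)
    have h4 : Real.sqrt (π/(σ2/8))/2 = Real.sqrt (2*π) / σs := by
      rw [show π/(σ2/8) = (2*π)/σ2*4 from by ring]
      rw [Real.sqrt_mul (by positivity) 4]
      rw [show Real.sqrt 4 = 2 from by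
        rw [show (4:ℝ) = 2^2 from by norm_num, Real.sqrt_sq (by norm_num)]]
      rw [Real.sqrt_div (by positivity : (0:ℝ) ≤ 2*π)]
      rw [hσs]
      ring
    calc ∫ t in (0:ℝ)..(2*T), (1 - t/(2*T)) * Cf t
        ≤ (2:ℝ)^k * ∫ t in (0:ℝ)..(2*T), Real.exp (-(σ2/8 * t^2)) := by rw [← h2]; exact h1
      _ ≤ (2:ℝ)^k * (Real.sqrt (π/(σ2/8))/2) := by
          apply mul_le_mul_of_nonneg_left h3 (by positivity)
      _ = (2:ℝ)^k * (Real.sqrt (2*π) / σs) := by rw [h4]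
  -- combine
  have hEsub : ∀ x ∈ E, KL ≤ K (g x) := by
    intro x hx
    apply hKlower
    have hxA : x ∈ A := (Finset.mem_filter.1 hx).2
    have hxA' : a ≤ (∑ i, c i * bval (x i)) + r ∧ (∑ i, c i * bval (x i)) + r ≤ b := hxA
    rcases hxA' with ⟨h1, h2⟩
    have hgx : g x = (∑ i, c i * bval (x i)) + r - m := by rw [hg, hρ]; ring
    rw [hgx, hm, hΛ, abs_le]
    constructor
    · linarith
    · linarith
  have hsum_lower : (E.card : ℝ) * KL ≤ ∑ x : ι → Bool, K (g x) := by
    calc (E.card : ℝ) * KL = ∑ _x ∈ E, KL := by rw [Finset.sum_const, nsmul_eq_mul]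
      _ ≤ ∑ x ∈ E, K (g x) := Finset.sum_le_sum hEsub
      _ ≤ ∑ x : ι → Bool, K (g x) :=
          Finset.sum_le_sum_of_subset_of_nonneg (Finset.subset_univ E)
            (fun x _ _ => hKnonneg (g x))
  have hfinal1 : (E.card : ℝ) * KL ≤ (1/T) * ((2:ℝ)^k * (Real.sqrt (2*π)/σs)) := by
    refine le_trans hsum_lower ?_
    rw [hsumK]
    apply mul_le_mul_of_nonneg_left hintbound (by positivity)
  rw [hmeasA]
  have hX : (E.card:ℝ) ≤ ((1/T) * ((2:ℝ)^k * (Real.sqrt (2*π)/σs)))/KL :=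
    (le_div_iff₀ hKL0).2 hfinal1
  have hTne : T ≠ 0 := ne_of_gt hT
  have hKLne : KL ≠ 0 := ne_of_gt hKL0
  have hσsne : σs ≠ 0 := ne_of_gt hσs0
  calc (E.card : ℝ) * ((1:ℝ)/2)^k
      ≤ (((1/T) * ((2:ℝ)^k * (Real.sqrt (2*π)/σs)))/KL) * ((1:ℝ)/2)^k := by
        apply mul_le_mul_of_nonneg_right hX (by positivity)
    _ = (1/KL) * (1/T) * (Real.sqrt (2*π)/σs) := by
        rw [div_pow, one_pow]
        field_simp

lemma sqrt_two_pi_le : Real.sqrt (2*π) ≤ 2.51 := by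
  have h1 : (2:ℝ)*π ≤ 6.3001 := by nlinarith [Real.pi_lt_d2]
  calc Real.sqrt (2*π) ≤ Real.sqrt 6.3001 := Real.sqrt_le_sqrt h1
    _ = 2.51 := by
        rw [show (6.3001:ℝ) = 2.51^2 from by norm_num, Real.sqrt_sq (by norm_num)]

set_option maxHeartbeats 1000000 in
lemma core {ι : Type} [Fintype ι] [DecidableEq ι] (c : ι → ℝ) (τ r a b : ℝ)
    (hc : ∀ i, |c i| ≤ τ) (hσ : 0 < ∑ i, c i ^ 2) (hab : a ≤ b) :
    ((Measure.pi fun _ : ι => coin (1/2))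
        {x : ι → Bool | a ≤ (∑ i, c i * bval (x i)) + r
          ∧ (∑ i, c i * bval (x i)) + r ≤ b}).toReal
      ≤ 2*(b-a)/Real.sqrt (∑ i, c i ^ 2) + 2*τ/Real.sqrt (∑ i, c i ^ 2) := by
  classical
  set σ2 : ℝ := ∑ i, c i ^ 2 with hσ2
  set σs : ℝ := Real.sqrt σ2 with hσs
  have hσs0 : 0 < σs := Real.sqrt_pos.2 hσ
  have hτ0 : 0 < τ := by
    by_contra h
    push_neg at h
    have hz : ∀ i, c i = 0 := by
      intro i
      have h1 := hc i
      have h2 := abs_nonneg (c i)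
      have : |c i| = 0 := le_antisymm (le_trans h1 h) h2
      exact abs_eq_zero.1 this
    rw [hσ2] at hσ
    simp [hz] at hσ
  set Λ : ℝ := (b-a)/2 with hΛ
  have hΛ0 : 0 ≤ Λ := by rw [hΛ]; linarith
  have hπ0 : (0:ℝ) < π := Real.pi_pos
  have hπ1 : (3.14:ℝ) ≤ π := by linarith [Real.pi_gt_d6]
  have hπ2 : π ≤ 3.15 := by linarith [Real.pi_lt_d2]
  set s : ℝ := Real.sqrt (2*π) with hs
  have hs0 : 0 ≤ s := Real.sqrt_nonneg _
  have hs251 : s ≤ 2.51 := sqrt_two_pi_le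
  have hRHS : 2*(b-a)/σs + 2*τ/σs = (4*Λ + 2*τ)/σs := by
    rw [hΛ]; ring
  rw [hRHS]
  by_cases hbr : π * Λ ≤ 2 * τ
  · -- T = π/(2τ)
    set T : ℝ := π/(2*τ) with hT
    have hT0 : 0 < T := by positivity
    have hTτ : T * τ ≤ π/2 := by
      have he : T * τ = π/2 := by
        rw [hT]
        field_simp
      linarith
    have hTL : T * Λ ≤ 1 := by
      rw [hT, div_mul_eq_mul_div, div_le_one (by positivity)]
      nlinarith
    have hcore := core_T c τ r a b T hc hσ hab hT0 hTτ hTL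
    refine le_trans hcore ?_
    set u : ℝ := T * Λ with hu
    have hu0 : 0 ≤ u := by positivity
    have hu1 : u ≤ 1 := hTL
    have h1T : 1/T = 2*τ/π := by
      rw [hT, one_div_div]
    have hΛu : 4*Λ = 8*τ*u/π := by
      rw [hu, hT]
      field_simp
      ring
    set w : ℝ := 1 - u^2/6 with hw
    have hw56 : 5/6 ≤ w := by
      rw [hw]; nlinarith
    have hwpos : 0 < w := lt_of_lt_of_le (by norm_num) hw56
    have hkey : 2*s ≤ (8*u + 2*π)*w^2 := by
      have hu2 : u^2 ≤ u := by nlinarith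
      have hu3 : u^3 ≤ u := by nlinarith
      have hu4 : u^4 ≤ u := by nlinarith
      rw [hw]
      nlinarith [hu2, hu3, hu4]
    rw [h1T, hΛu]
    have e1 : 1/w^2 * (2*τ/π) * (s/σs) = (τ*(2*s))/(π*w^2) / σs := by
      field_simp
    have e2 : (8*τ*u/π + 2*τ) = (τ*((8*u+2*π)*w^2))/(π*w^2) := by
      field_simp
    rw [e1, e2]
    apply div_le_div_of_nonneg_right ?_ hσs0.le
    · apply div_le_div_of_nonneg_right ?_ (by positivity)
      exact mul_le_mul_of_nonneg_left hkey (le_of_lt hτ0)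
  · -- T = 1/Λ
    push_neg at hbr
    have hΛpos : 0 < Λ := by nlinarith
    set T : ℝ := 1/Λ with hT
    have hT0 : 0 < T := by positivity
    have hTL1 : T * Λ = 1 := by
      rw [hT]; field_simp
    have hTτ : T * τ ≤ π/2 := by
      rw [hT, one_div, inv_mul_eq_div, div_le_iff₀ hΛpos]
      nlinarith
    have hcore := core_T c τ r a b T hc hσ hab hT0 hTτ (le_of_eq hTL1)
    refine le_trans hcore ?_
    rw [show T * ((b-a)/2) = 1 from hTL1]
    rw [show (1:ℝ)/(1 - 1^2/6)^2 = 36/25 from by norm_num]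
    rw [show (1:ℝ)/T = Λ from by rw [hT, one_div_one_div]]
    have e1 : 36/25 * Λ * (s/σs) = (36/25 * Λ * s)/σs := by ring
    rw [e1]
    apply div_le_div_of_nonneg_right ?_ hσs0.le
    nlinarith

/-- Berry–Esseen small-ball bound: let `w ∈ ℝ^n` with `|wⁱ| ≤ τ` and let
`S ⊆ [n]` with `σ² = Σ_{i∈S} (wⁱ)² > 0`.  If the distribution `μ` of `y ∈ {0,1}^n` is such
that the coordinates in `S` are i.i.d. uniform bits independent of the (arbitrary) remaining
coordinates, then for all `a ≤ b`, `Pr[⟨w,y⟩ ∈ [a,b]] ≤ 2(b−a)/σ + 2τ/σ`. -/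
theorem stmt_18 (n : ℕ) (τ : ℝ) (w : Fin n → ℝ)
    (hw : ∀ i, |w i| ≤ τ)
    (S : Finset (Fin n))
    (hσ : 0 < ∑ i ∈ S, (w i) ^ 2)
    (μ : Measure (Fin n → Bool)) [IsProbabilityMeasure μ]
    (ν : Measure ({i : Fin n // i ∉ S} → Bool)) (hν : IsProbabilityMeasure ν)
    (hμ : μ = Measure.map
      (fun p : ({i : Fin n // i ∈ S} → Bool) × ({i : Fin n // i ∉ S} → Bool) =>
        fun i : Fin n => if h : i ∈ S then p.1 ⟨i, h⟩ else p.2 ⟨i, h⟩)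
      ((Measure.pi fun _ : {i : Fin n // i ∈ S} => coin (1 / 2)).prod ν)) :
    ∀ a b : ℝ, a ≤ b →
      (μ {y | a ≤ ∑ i, w i * bval (y i) ∧ ∑ i, w i * bval (y i) ≤ b}).toReal
        ≤ 2 * (b - a) / Real.sqrt (∑ i ∈ S, (w i) ^ 2) +
          2 * τ / Real.sqrt (∑ i ∈ S, (w i) ^ 2) := by
  intro a b hab
  haveI := hν
  classical
  -- basic facts
  have hSne : S.Nonempty := by
    by_contra h
    rw [Finset.not_nonempty_iff_eq_empty] at h
    rw [h] at hσ
    simp at hσ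
  have hτ0 : 0 ≤ τ := le_trans (abs_nonneg _) (hw hSne.choose)
  have hsum2 : ∑ i : {i : Fin n // i ∈ S}, (w i.1) ^ 2 = ∑ i ∈ S, (w i) ^ 2 :=
    Finset.sum_coe_sort S (fun i => w i ^ 2)
  have hσ' : 0 < ∑ i : {i : Fin n // i ∈ S}, (w i.1) ^ 2 := by rw [hsum2]; exact hσ
  have hRHS0 : 0 ≤ 2 * (b - a) / Real.sqrt (∑ i ∈ S, (w i) ^ 2) +
      2 * τ / Real.sqrt (∑ i ∈ S, (w i) ^ 2) := by
    apply add_nonneg <;> apply div_nonneg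
    · linarith
    · exact Real.sqrt_nonneg _
    · linarith
    · exact Real.sqrt_nonneg _
  -- measurability
  have hΦmeas : Measurable
      (fun p : ({i : Fin n // i ∈ S} → Bool) × ({i : Fin n // i ∉ S} → Bool) =>
        fun i : Fin n => if h : i ∈ S then p.1 ⟨i, h⟩ else p.2 ⟨i, h⟩) := by
    apply measurable_pi_lambda
    intro i
    by_cases h : i ∈ S
    · have he : (fun p : ({i : Fin n // i ∈ S} → Bool) × ({i : Fin n // i ∉ S} → Bool) =>
          if h' : i ∈ S then p.1 ⟨i, h'⟩ else p.2 ⟨i, h'⟩)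
          = fun p => p.1 ⟨i, h⟩ := funext fun p => dif_pos h
      rw [he]
      exact (measurable_pi_apply _).comp measurable_fst
    · have he : (fun p : ({i : Fin n // i ∈ S} → Bool) × ({i : Fin n // i ∉ S} → Bool) =>
          if h' : i ∈ S then p.1 ⟨i, h'⟩ else p.2 ⟨i, h'⟩)
          = fun p => p.2 ⟨i, h⟩ := funext fun p => dif_neg h
      rw [he]
      exact (measurable_pi_apply _).comp measurable_snd
  have hAmeas : MeasurableSet {y : Fin n → Bool |
      a ≤ ∑ i, w i * bval (y i) ∧ ∑ i, w i * bval (y i) ≤ b} := meas_all _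
  rw [hμ, Measure.map_apply hΦmeas hAmeas]
  rw [Measure.prod_apply_symm (hΦmeas hAmeas)]
  -- the sum splits
  have hsum_split : ∀ (x : {i : Fin n // i ∈ S} → Bool) (z : {i : Fin n // i ∉ S} → Bool),
      (∑ i, w i * bval ((fun i : Fin n => if h : i ∈ S then x ⟨i, h⟩ else z ⟨i, h⟩) i))
        = (∑ i : {i : Fin n // i ∈ S}, w i.1 * bval (x i))
          + (∑ j : {i : Fin n // i ∉ S}, w j.1 * bval (z j)) := by
    intro x z
    rw [← Finset.sum_add_sum_compl S]
    congr 1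
    · rw [Finset.sum_subtype S (fun _ => Iff.rfl)
        (fun i : Fin n => w i * bval ((fun i : Fin n => if h : i ∈ S then x ⟨i, h⟩ else z ⟨i, h⟩) i))]
      apply Fintype.sum_congr
      intro i
      have hi : ((fun i : Fin n => if h : i ∈ S then x ⟨i, h⟩ else z ⟨i, h⟩) (i:Fin n)) = x i := by
        simp only [dif_pos i.2, Subtype.coe_eta]
      rw [hi]
    · rw [Finset.sum_subtype Sᶜ (fun _ => Finset.mem_compl)
        (fun i : Fin n => w i * bval ((fun i : Fin n => if h : i ∈ S then x ⟨i, h⟩ else z ⟨i, h⟩) i))]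
      apply Fintype.sum_congr
      intro j
      have hj : ((fun i : Fin n => if h : i ∈ S then x ⟨i, h⟩ else z ⟨i, h⟩) (j:Fin n)) = z j := by
        simp only [dif_neg j.2, Subtype.coe_eta]
      rw [hj]
  -- pointwise slice bound
  have hcorez : ∀ z : {i : Fin n // i ∉ S} → Bool,
      ((Measure.pi fun _ : {i : Fin n // i ∈ S} => coin (1/2))
        ((fun x => (x, z)) ⁻¹'
          ((fun p : ({i : Fin n // i ∈ S} → Bool) × ({i : Fin n // i ∉ S} → Bool) =>
            fun i : Fin n => if h : i ∈ S then p.1 ⟨i, h⟩ else p.2 ⟨i, h⟩) ⁻¹'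
            {y : Fin n → Bool | a ≤ ∑ i, w i * bval (y i) ∧ ∑ i, w i * bval (y i) ≤ b})))
        ≤ ENNReal.ofReal (2 * (b - a) / Real.sqrt (∑ i ∈ S, (w i) ^ 2) +
            2 * τ / Real.sqrt (∑ i ∈ S, (w i) ^ 2)) := by
    intro z
    set r : ℝ := ∑ j : {i : Fin n // i ∉ S}, w j.1 * bval (z j) with hr
    have hset : ((fun x => (x, z)) ⁻¹'
          ((fun p : ({i : Fin n // i ∈ S} → Bool) × ({i : Fin n // i ∉ S} → Bool) =>
            fun i : Fin n => if h : i ∈ S then p.1 ⟨i, h⟩ else p.2 ⟨i, h⟩) ⁻¹'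
            {y : Fin n → Bool | a ≤ ∑ i, w i * bval (y i) ∧ ∑ i, w i * bval (y i) ≤ b}))
        = {x : {i : Fin n // i ∈ S} → Bool |
            a ≤ (∑ i : {i : Fin n // i ∈ S}, w i.1 * bval (x i)) + r
            ∧ (∑ i : {i : Fin n // i ∈ S}, w i.1 * bval (x i)) + r ≤ b} := by
      ext x
      simp only [Set.mem_preimage, Set.mem_setOf_eq]
      rw [hsum_split x z]
    rw [hset]
    have hcore := core (fun i : {i : Fin n // i ∈ S} => w i.1) τ r a b
      (fun i => hw i.1) hσ' hab
    rw [hsum2] at hcore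
    exact (ENNReal.le_ofReal_iff_toReal_le (measure_ne_top _ _) hRHS0).2 hcore
  -- integrate
  have hint : (∫⁻ z, ((Measure.pi fun _ : {i : Fin n // i ∈ S} => coin (1/2))
        ((fun x => (x, z)) ⁻¹'
          ((fun p : ({i : Fin n // i ∈ S} → Bool) × ({i : Fin n // i ∉ S} → Bool) =>
            fun i : Fin n => if h : i ∈ S then p.1 ⟨i, h⟩ else p.2 ⟨i, h⟩) ⁻¹'
            {y : Fin n → Bool | a ≤ ∑ i, w i * bval (y i) ∧ ∑ i, w i * bval (y i) ≤ b}))) ∂ν)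
      ≤ ENNReal.ofReal (2 * (b - a) / Real.sqrt (∑ i ∈ S, (w i) ^ 2) +
          2 * τ / Real.sqrt (∑ i ∈ S, (w i) ^ 2)) := by
    calc _ ≤ ∫⁻ _z, ENNReal.ofReal (2 * (b - a) / Real.sqrt (∑ i ∈ S, (w i) ^ 2) +
          2 * τ / Real.sqrt (∑ i ∈ S, (w i) ^ 2)) ∂ν := lintegral_mono hcorez
      _ = _ := by rw [lintegral_const, measure_univ, mul_one]
  calc _ ≤ (ENNReal.ofReal (2 * (b - a) / Real.sqrt (∑ i ∈ S, (w i) ^ 2) +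
          2 * τ / Real.sqrt (∑ i ∈ S, (w i) ^ 2))).toReal :=
        ENNReal.toReal_mono ENNReal.ofReal_ne_top hint
    _ = _ := ENNReal.toReal_ofReal hRHS0
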